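/- Let g_{p,1} be the (2p+1)-dimensional Lie algebra over a field of characteristic 0 with basis {X_1,...,X_{2p+1}} and nonzero brackets [X_1, X_{2i}] = X_{2i+1} for 1 ≤ i ≤ p. For p = 2, every 5-dimensional 2-step nilpotent Lie algebra with characteristic sequence (2,2,1) is isomorphic to g_{2,1}. -/

import Mathlib

/-- Every 5-dimensional 2-step nilpotent Lie algebra with characteristic sequence
(2,2,1) (equivalently, some ad(X) has rank 2) is isomorphic to g_{2,1}, i.e.
admits a basis with only nonzero brackets [X₁,X₂] = X₃ and [X₁,X₄] = X₅. -/
theorem stmt_9 (K : Type*) (L : Type*) [Field K] [CharZero K] [IsAlgClosed K]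
    [LieRing L] [LieAlgebra K L] [Module.Finite K L]
    (h2step : ∀ x y z : L, ⁅⁅x, y⁆, z⁆ = 0)
    (hdim : Module.finrank K L = 5)
    (hcs : ∃ x : L, Module.finrank K (LinearMap.range ((LieAlgebra.ad K L) x)) = 2) :
    ∃ B : Module.Basis (Fin 5) K L,
      ⁅B 0, B 1⁆ = B 2 ∧ ⁅B 0, B 3⁆ = B 4 ∧
      ∀ i j : Fin 5,
        (i, j) ≠ (0, 1) → (i, j) ≠ (1, 0) → (i, j) ≠ (0, 3) → (i, j) ≠ (3, 0) →
          ⁅B i, B j⁆ = 0 := by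
  classical
  obtain ⟨x, hx⟩ := hcs
  set f : L →ₗ[K] L := (LieAlgebra.ad K L) x with hfdef
  have hfapp : ∀ y : L, f y = ⁅x, y⁆ := fun y => rfl
  -- a basis of the range of ad x
  let b : Module.Basis (Fin 2) K (LinearMap.range f) := Module.finBasisOfFinrankEq K _ hx
  set e3 : L := (b 0 : L) with he3def
  set e5 : L := (b 1 : L) with he5def
  obtain ⟨y2, hy2⟩ := LinearMap.mem_range.mp (b 0).2
  obtain ⟨y4, hy4⟩ := LinearMap.mem_range.mp (b 1).2
  have hxy2 : ⁅x, y2⁆ = e3 := hy2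
  have hxy4 : ⁅x, y4⁆ = e5 := hy4
  -- e3, e5 are central
  have he3c : ∀ w : L, ⁅e3, w⁆ = 0 := by
    intro w; rw [← hxy2]; exact h2step x y2 w
  have he5c : ∀ w : L, ⁅e5, w⁆ = 0 := by
    intro w; rw [← hxy4]; exact h2step x y4 w
  have he3c' : ∀ w : L, ⁅w, e3⁆ = 0 := by
    intro w; rw [← lie_skew, he3c, neg_zero]
  have he5c' : ∀ w : L, ⁅w, e5⁆ = 0 := by
    intro w; rw [← lie_skew, he5c, neg_zero]
  -- e3, e5 are linearly independent
  have hpair : LinearIndependent K ![e3, e5] := by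
    have h := (b.linearIndependent).map' (LinearMap.range f).subtype
      (Submodule.ker_subtype _)
    have heq : ![e3, e5] = (LinearMap.range f).subtype ∘ b := by
      funext i; fin_cases i <;> rfl
    rw [heq]; exact h
  have hpair' : ∀ a c : K, a • e3 + c • e5 = 0 → a = 0 ∧ c = 0 := by
    intro a c h
    have h2 := Fintype.linearIndependent_iff.mp hpair ![a, c] ?_
    · exact ⟨h2 0, h2 1⟩
    · simpa [Fin.sum_univ_two] using h
  have he3ne : e3 ≠ 0 := by
    simpa using hpair.ne_zero 0
  -- f is nonzero
  have hfne : f ≠ 0 := by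
    intro h0
    rw [h0, LinearMap.range_zero] at hx
    simp at hx
  -- x, e3, e5 are linearly independent
  have htriple : ∀ a c d : K, a • x + c • e3 + d • e5 = 0 → a = 0 ∧ c = 0 ∧ d = 0 := by
    intro a c d h
    have ha : a = 0 := by
      by_contra ha
      apply hfne
      ext w
      have h1 : ⁅a • x + c • e3 + d • e5, w⁆ = 0 := by rw [h, zero_lie]
      have h2 : a • ⁅x, w⁆ = 0 := by
        simpa [add_lie, smul_lie, he3c, he5c] using h1
      rcases smul_eq_zero.mp h2 with h3 | h3
      · exact absurd h3 ha
      · simpa [hfapp] using h3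
    rw [ha, zero_smul, zero_add] at h
    obtain ⟨hc, hd⟩ := hpair' c d h
    exact ⟨ha, hc, hd⟩
  have hind3 : LinearIndependent K ![x, e3, e5] := by
    rw [Fintype.linearIndependent_iff]
    intro g hg
    have hg' : g 0 • x + g 1 • e3 + g 2 • e5 = 0 := by
      simpa [Fin.sum_univ_three] using hg
    obtain ⟨h0, h1, h2⟩ := htriple _ _ _ hg'
    intro i; fin_cases i <;> assumption
  -- kernel of f equals span {x, e3, e5}
  have hxe3 : ⁅x, e3⁆ = 0 := he3c' x
  have hxe5 : ⁅x, e5⁆ = 0 := he5c' x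
  have hker : Submodule.span K (Set.range ![x, e3, e5]) = LinearMap.ker f := by
    apply Submodule.eq_of_le_of_finrank_le
    · rw [Submodule.span_le]
      rintro u ⟨i, rfl⟩
      fin_cases i <;>
        simp [LinearMap.mem_ker, hfapp, hxe3, hxe5]
    · have h1 : Module.finrank K (LinearMap.ker f) = 3 := by
        have h2 := LinearMap.finrank_range_add_finrank_ker f
        rw [hx, hdim] at h2
        omega
      have h3 : Module.finrank K (Submodule.span K (Set.range ![x, e3, e5])) = 3 := by
        rw [finrank_span_eq_card hind3]; simp
      rw [h1, h3]
  -- the commutator ⁅y2, y4⁆ lies in the span of e3, e5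
  have hcker : ⁅y2, y4⁆ ∈ LinearMap.ker f := by
    rw [LinearMap.mem_ker, hfapp, ← lie_skew, h2step, neg_zero]
  rw [← hker, Submodule.mem_span_range_iff_exists_fun] at hcker
  obtain ⟨g, hg⟩ := hcker
  have hg' : g 0 • x + g 1 • e3 + g 2 • e5 = ⁅y2, y4⁆ := by
    simpa [Fin.sum_univ_three] using hg
  have hg0 : g 0 = 0 := by
    have h1 : ⁅(⁅y2, y4⁆ : L), y2⁆ = 0 := h2step y2 y4 y2
    rw [← hg'] at h1
    have h2 : g 0 • e3 = 0 := by
      simpa [add_lie, smul_lie, he3c, he5c, hxy2] using h1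
    rcases smul_eq_zero.mp h2 with h3 | h3
    · exact h3
    · exact absurd h3 he3ne
  have hc : ⁅y2, y4⁆ = g 1 • e3 + g 2 • e5 := by
    rw [← hg', hg0, zero_smul, zero_add]
  -- the new basis vectors
  set v : Fin 5 → L := ![x, y2 - g 2 • x, e3, y4 + g 1 • x, e5] with hvdef
  have hv0 : v 0 = x := rfl
  have hv1 : v 1 = y2 - g 2 • x := rfl
  have hv2 : v 2 = e3 := rfl
  have hv3 : v 3 = y4 + g 1 • x := rfl
  have hv4 : v 4 = e5 := rfl
  have h01 : ⁅v 0, v 1⁆ = e3 := by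
    rw [hv0, hv1, lie_sub, lie_smul, lie_self, smul_zero, sub_zero, hxy2]
  have h03 : ⁅v 0, v 3⁆ = e5 := by
    rw [hv0, hv3, lie_add, lie_smul, lie_self, smul_zero, add_zero, hxy4]
  have h13 : ⁅v 1, v 3⁆ = 0 := by
    rw [hv1, hv3]
    have hy2x : ⁅y2, x⁆ = -e3 := by rw [← lie_skew, hxy2]
    simp only [sub_lie, lie_add, lie_smul, smul_lie, lie_self, smul_zero, hy2x, hxy4, hc]
    module
  -- linear independence of v
  have hindep : LinearIndependent K v := by
    rw [Fintype.linearIndependent_iff]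
    intro c hc5
    have hsum : c 0 • v 0 + c 1 • v 1 + c 2 • v 2 + c 3 • v 3 + c 4 • v 4 = 0 := by
      simpa [Fin.sum_univ_five] using hc5
    -- apply f
    have hf0 : ⁅x, (c 0 • v 0 + c 1 • v 1 + c 2 • v 2 + c 3 • v 3 + c 4 • v 4 : L)⁆ = 0 := by
      rw [hsum, lie_zero]
    have hfv : c 1 • e3 + c 3 • e5 = 0 := by
      have : ⁅x, v 0⁆ = 0 := by rw [hv0, lie_self]
      have h1 : ⁅x, v 1⁆ = e3 := by
        rw [hv1, lie_sub, lie_smul, lie_self, smul_zero, sub_zero, hxy2]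
      have h3 : ⁅x, v 3⁆ = e5 := by
        rw [hv3, lie_add, lie_smul, lie_self, smul_zero, add_zero, hxy4]
      simpa [lie_add, lie_smul, this, h1, h3, hv2, hv4, hxe3, hxe5] using hf0
    obtain ⟨hc1, hc3⟩ := hpair' _ _ hfv
    rw [hc1, hc3, zero_smul, zero_smul, add_zero, add_zero] at hsum
    rw [hv0, hv2, hv4] at hsum
    obtain ⟨hc0, hc2, hc4⟩ := htriple _ _ _ hsum
    intro i; fin_cases i <;> assumption
  have hcard : Fintype.card (Fin 5) = Module.finrank K L := by simp [hdim]
  refine ⟨basisOfLinearIndependentOfCardEqFinrank hindep hcard, ?_, ?_, ?_⟩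
  · rw [coe_basisOfLinearIndependentOfCardEqFinrank]
    rw [h01, hv2]
  · rw [coe_basisOfLinearIndependentOfCardEqFinrank]
    rw [h03, hv4]
  · intro i j hij1 hij2 hij3 hij4
    rw [coe_basisOfLinearIndependentOfCardEqFinrank]
    have h31 : ⁅v 3, v 1⁆ = 0 := by rw [← lie_skew, h13, neg_zero]
    fin_cases i <;> fin_cases j <;>
      first
        | exact absurd rfl hij1
        | exact absurd rfl hij2
        | exact absurd rfl hij3
        | exact absurd rfl hij4
        | exact lie_self _
        | exact h13
        | exact h31
        | exact hxe3
        | exact hxe5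
        | exact he3c _
        | exact he5c _
        | exact he3c' _
        | exact he5c' _
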